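/- arXiv:2312.10138 — 2 statements merged into one kernel-verified Lean document; each statement's English description precedes it below -/
import Mathlib

section
/- For β > 0 and real x, the regularized integral ∫₀^∞ ω^{β-1} e^{-iωx - ωε} dω converges for ε > 0 and its limit as ε → 0⁺ equals Γ(β)(-i)^β / (x - i0)^β, i.e. Γ(β) e^{-iπβ/2·sign(x)} |x|^{-β} when x ≠ 0. -/
open MeasureTheory Filter Topology Complex

lemma auxA {b r : ℝ} (hb : 0 < b) (hr : 0 < r) :
    IntegrableOn (fun t : ℝ => t ^ (b - 1) * Real.exp (-(r * t))) (Set.Ioi 0) := by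
  have h0 := Real.GammaIntegral_convergent hb
  rw [← mul_zero r, ← integrableOn_Ioi_comp_mul_left_iff _ _ hr] at h0
  refine IntegrableOn.congr_fun (h0.const_mul (r ^ (b - 1))⁻¹) (fun t ht ↦ ?_) measurableSet_Ioi
  rw [Set.mem_Ioi] at ht
  rw [Real.mul_rpow hr.le ht.le]
  have hne : r ^ (b-1) ≠ 0 := (Real.rpow_pos_of_pos hr (b-1)).ne'
  field_simp [hne]

lemma auxB {b : ℝ} (hb : 0 < b) {z : ℂ} (hz : 0 < z.re) :
    IntegrableOn (fun t : ℝ => (t : ℂ) ^ ((b : ℂ) - 1) * Complex.exp (-(z * t)))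
      (Set.Ioi 0) := by
  have hmeas : AEStronglyMeasurable
      (fun t : ℝ => (t : ℂ) ^ ((b : ℂ) - 1) * Complex.exp (-(z * t)))
      (volume.restrict (Set.Ioi 0)) := by
    apply ContinuousOn.aestronglyMeasurable _ measurableSet_Ioi
    apply ContinuousOn.mul
    · intro t ht
      exact ((continuousAt_cpow_const (by simp [Complex.mem_slitPlane_iff, Set.mem_Ioi.mp ht] :
          (t : ℂ) ∈ Complex.slitPlane)).comp
        Complex.continuous_ofReal.continuousAt).continuousWithinAt
    · exact (Complex.continuous_exp.comp
        ((continuous_const.mul Complex.continuous_ofReal).neg)).continuousOn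
  refine Integrable.mono' (auxA hb hz) hmeas ?_
  filter_upwards [ae_restrict_mem measurableSet_Ioi] with t ht
  rw [Set.mem_Ioi] at ht
  rw [norm_mul,
    Complex.norm_cpow_eq_rpow_re_of_pos ht, Complex.norm_exp]
  simp [Complex.sub_re, mul_comm]

lemma auxM {b : ℝ} (z : ℂ) : AEStronglyMeasurable
    (fun t : ℝ => (t : ℂ) ^ ((b : ℂ) - 1) * Complex.exp (-(z * t)))
    (volume.restrict (Set.Ioi 0)) := by
  apply ContinuousOn.aestronglyMeasurable _ measurableSet_Ioi
  apply ContinuousOn.mul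
  · intro t ht
    exact ((continuousAt_cpow_const (by simp [Complex.mem_slitPlane_iff, Set.mem_Ioi.mp ht] :
        (t : ℂ) ∈ Complex.slitPlane)).comp
      Complex.continuous_ofReal.continuousAt).continuousWithinAt
  · exact (Complex.continuous_exp.comp
      ((continuous_const.mul Complex.continuous_ofReal).neg)).continuousOn

lemma auxD {b : ℝ} (hb : 0 < b) {z₀ : ℂ} (hz : 0 < z₀.re) :
    DifferentiableAt ℂ
      (fun z : ℂ => ∫ t in Set.Ioi (0 : ℝ), (t : ℂ) ^ ((b : ℂ) - 1) * Complex.exp (-(z * t)))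
      z₀ := by
  set δ : ℝ := z₀.re / 2 with hδ
  have hδ0 : 0 < δ := by positivity
  have main := hasDerivAt_integral_of_dominated_loc_of_deriv_le (μ := volume.restrict (Set.Ioi 0))
    (F := fun (z : ℂ) (t : ℝ) => (t : ℂ) ^ ((b : ℂ) - 1) * Complex.exp (-(z * t)))
    (F' := fun (z : ℂ) (t : ℝ) => ((t : ℂ) ^ ((b : ℂ) - 1) * Complex.exp (-(z * t))) * (-t))
    (x₀ := z₀) (bound := fun t : ℝ => t ^ ((b + 1) - 1) * Real.exp (-(δ * t)))
    (s := Metric.ball z₀ δ) (Metric.ball_mem_nhds z₀ hδ0) (Filter.Eventually.of_forall fun z => auxM z) (auxB hb hz)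
    ((auxM z₀).mul (Complex.continuous_ofReal.neg.aestronglyMeasurable.restrict))
    ?_ (auxA (by linarith) hδ0) ?_
  · exact main.2.differentiableAt
  · -- bound
    filter_upwards [ae_restrict_mem measurableSet_Ioi] with t ht z hzball
    rw [Set.mem_Ioi] at ht
    have hre : δ ≤ z.re := by
      have := Complex.abs_re_le_norm (z - z₀)
      rw [Complex.sub_re] at this
      have h2 : |z.re - z₀.re| < δ := lt_of_le_of_lt this (mem_ball_iff_norm.mp hzball)
      have := abs_lt.mp h2
      linarith [this.1]
    rw [norm_mul, norm_mul,
      Complex.norm_cpow_eq_rpow_re_of_pos ht, Complex.norm_exp]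
    rw [norm_neg, Complex.norm_real, Real.norm_eq_abs, abs_of_pos ht]
    have hrw : ((b : ℂ) - 1).re = b - 1 := by simp
    have hrw2 : (-(z * (t : ℂ))).re = -(z.re * t) := by simp
    rw [hrw, hrw2, show b + 1 - 1 = (b - 1) + 1 by ring, Real.rpow_add_one ht.ne']
    rw [mul_right_comm]
    gcongr
  · -- differentiability
    filter_upwards with t z _
    have h1 : HasDerivAt (fun z : ℂ => -(z * t)) (-t) z := by
      exact (hasDerivAt_mul_const (t : ℂ)).neg
    have h2 := (h1.cexp).const_mul ((t : ℂ) ^ ((b : ℂ) - 1))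
    simpa [mul_assoc] using h2

lemma auxReal {b : ℝ} (hb : 0 < b) {c : ℝ} (hc : 0 < c) :
    ∫ t in Set.Ioi (0 : ℝ), (t : ℂ) ^ ((b : ℂ) - 1) * Complex.exp (-((c : ℂ) * t)) =
      Complex.Gamma b * (c : ℂ) ^ (-(b : ℂ)) := by
  have := Complex.integral_cpow_mul_exp_neg_mul_Ioi
    (a := (b : ℂ)) (r := c) (by simpa using hb) hc
  have harg : ((c : ℂ)).arg ≠ Real.pi := by
    rw [Complex.arg_ofReal_of_nonneg hc.le]; exact Real.pi_ne_zero.symm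
  rw [this, one_div, Complex.inv_cpow _ _ harg, ← Complex.cpow_neg, mul_comm]

lemma auxE {b : ℝ} (hb : 0 < b) {z : ℂ} (hz : 0 < z.re) :
    ∫ t in Set.Ioi (0 : ℝ), (t : ℂ) ^ ((b : ℂ) - 1) * Complex.exp (-(z * t)) =
      Complex.Gamma b * z ^ (-(b : ℂ)) := by
  set U : Set ℂ := {w : ℂ | 0 < w.re} with hUdef
  have hUopen : IsOpen U := isOpen_lt continuous_const Complex.continuous_re
  set F : ℂ → ℂ :=
    fun w => ∫ t in Set.Ioi (0 : ℝ), (t : ℂ) ^ ((b : ℂ) - 1) * Complex.exp (-(w * t)) with hF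
  set G : ℂ → ℂ := fun w => Complex.Gamma b * w ^ (-(b : ℂ)) with hG
  have hFd : DifferentiableOn ℂ F U := fun w hw => (auxD hb hw).differentiableWithinAt
  have hFa : AnalyticOnNhd ℂ F U := hFd.analyticOnNhd hUopen
  have hGa : AnalyticOnNhd ℂ G U := by
    refine DifferentiableOn.analyticOnNhd (fun w hw => ?_) hUopen
    exact ((differentiableAt_id.cpow (differentiableAt_const _)
      (Or.inl hw)).const_mul _).differentiableWithinAt
  have hu : Filter.Tendsto (fun n : ℕ => ((1 + ((n : ℝ) + 1)⁻¹ : ℝ) : ℂ)) atTop (𝓝[≠] 1) := by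
    rw [tendsto_nhdsWithin_iff]
    constructor
    · have : Filter.Tendsto (fun n : ℕ => (1 + ((n : ℝ) + 1)⁻¹ : ℝ)) atTop (𝓝 1) := by
        have h0 : Filter.Tendsto (fun n : ℕ => ((n : ℝ) + 1)⁻¹) atTop (𝓝 0) :=
          tendsto_one_div_add_atTop_nhds_zero_nat.congr (by simp [one_div])
        simpa using tendsto_const_nhds.add h0
      have h2 := (Complex.continuous_ofReal.tendsto 1).comp this
      rw [Complex.ofReal_one] at h2
      exact h2
    · filter_upwards with n
      simp only [Set.mem_compl_iff, Set.mem_singleton_iff]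
      intro h
      have : (1 + ((n : ℝ) + 1)⁻¹ : ℝ) = 1 := by exact_mod_cast h
      have hpos : (0 : ℝ) < ((n : ℝ) + 1)⁻¹ := by positivity
      linarith
  have hfreq : ∃ᶠ w in 𝓝[≠] (1 : ℂ), F w = G w := by
    refine hu.frequently (Filter.Frequently.of_forall fun n => ?_)
    exact auxReal hb (by positivity)
  have := hFa.eqOn_of_preconnected_of_frequently_eq hGa
    (convex_halfSpace_re_gt 0).isPreconnected (by simp [hUdef] : (1 : ℂ) ∈ U) hfreq
  exact this hz

lemma auxArg {x : ℝ} (hx : x ≠ 0) :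
    Complex.log (Complex.I * x) = Real.log |x| + (Real.sign x * (Real.pi / 2)) * Complex.I := by
  have habs : ‖Complex.I * x‖ = |x| := by
    rw [norm_mul, Complex.norm_I, Complex.norm_real, Real.norm_eq_abs, one_mul]
  rcases hx.lt_or_gt with h | h
  · have h1 : Complex.I * (x : ℂ) = ((-x : ℝ) : ℂ) * (-Complex.I) := by push_cast; ring
    have harg : (Complex.I * (x : ℂ)).arg = -(Real.pi / 2) := by
      rw [h1, Complex.arg_real_mul _ (by linarith : (0:ℝ) < -x), Complex.arg_neg_I]
    rw [Complex.log, habs, harg, Real.sign_of_neg h]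
    push_cast; ring
  · have h1 : Complex.I * (x : ℂ) = ((x : ℝ) : ℂ) * Complex.I := by ring
    have harg : (Complex.I * (x : ℂ)).arg = Real.pi / 2 := by
      rw [h1, Complex.arg_real_mul _ h, Complex.arg_I]
    rw [Complex.log, habs, harg, Real.sign_of_pos h]
    push_cast; ring

lemma auxBranch {b x : ℝ} (hx : x ≠ 0) :
    (Complex.I * x) ^ (-(b : ℂ)) =
      Complex.exp (-Complex.I * Real.pi * b / 2 * Real.sign x) * (|x| : ℝ) ^ (-(b : ℂ)) := by
  have hxabs : (0:ℝ) < |x| := abs_pos.mpr hx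
  have hne : Complex.I * (x : ℂ) ≠ 0 := by
    simp [Complex.I_ne_zero, Complex.ofReal_ne_zero.mpr hx]
  have hne2 : ((|x| : ℝ) : ℂ) ≠ 0 := Complex.ofReal_ne_zero.mpr hxabs.ne'
  rw [Complex.cpow_def_of_ne_zero hne, Complex.cpow_def_of_ne_zero hne2,
    auxArg hx, ← Complex.ofReal_log hxabs.le, ← Complex.exp_add]
  congr 1
  ring

/-- For `β > 0` and real `x ≠ 0`, the regularized integral
`∫₀^∞ ω^{β-1} e^{-iωx - ωε} dω` converges for every `ε > 0` and its limit as
`ε → 0⁺` equals `Γ(β) e^{-iπβ/2 · sign x} |x|^{-β}`. -/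
theorem stmt0 (β x : ℝ) (hβ : 0 < β) (hx : x ≠ 0) :
    (∀ ε : ℝ, 0 < ε → IntegrableOn
      (fun ω : ℝ => (ω : ℂ) ^ ((β : ℂ) - 1) *
        Complex.exp (-Complex.I * ω * x - ω * ε)) (Set.Ioi 0)) ∧
    Tendsto (fun ε : ℝ => ∫ ω in Set.Ioi (0 : ℝ),
        (ω : ℂ) ^ ((β : ℂ) - 1) * Complex.exp (-Complex.I * ω * x - ω * ε))
      (𝓝[>] 0)
      (𝓝 (Complex.Gamma β *
        Complex.exp (-Complex.I * Real.pi * β / 2 * Real.sign x) *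
        (|x| : ℝ) ^ (-(β : ℂ)))) := by
  have hre : ∀ ε : ℝ, (((ε : ℂ) + Complex.I * x)).re = ε := by
    intro ε; simp
  have heq : ∀ ε ω : ℝ, (-Complex.I * ω * x - ω * ε : ℂ) =
      -(((ε : ℂ) + Complex.I * x) * ω) := by
    intro ε ω; ring
  have hfun : ∀ ε : ℝ, (fun ω : ℝ => (ω : ℂ) ^ ((β : ℂ) - 1) *
      Complex.exp (-Complex.I * ω * x - ω * ε)) =
      (fun ω : ℝ => (ω : ℂ) ^ ((β : ℂ) - 1) *
      Complex.exp (-(((ε : ℂ) + Complex.I * x) * ω))) := by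
    intro ε; funext ω; rw [heq]
  constructor
  · intro ε hε
    rw [hfun ε]
    exact auxB hβ (by rw [hre]; exact hε)
  · have hval : ∀ ε : ℝ, 0 < ε →
        (∫ ω in Set.Ioi (0 : ℝ), (ω : ℂ) ^ ((β : ℂ) - 1) *
          Complex.exp (-Complex.I * ω * x - ω * ε)) =
        Complex.Gamma β * ((ε : ℂ) + Complex.I * x) ^ (-(β : ℂ)) := by
      intro ε hε
      rw [hfun ε]
      exact auxE hβ (by rw [hre]; exact hε)
    have h1 : Tendsto (fun ε : ℝ => ((ε : ℂ) + Complex.I * x)) (𝓝 0)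
        (𝓝 (Complex.I * x)) := by
      have : Continuous (fun ε : ℝ => ((ε : ℂ) + Complex.I * x)) :=
        Complex.continuous_ofReal.add continuous_const
      simpa using this.tendsto 0
    have h2 : ContinuousAt (fun z : ℂ => z ^ (-(β : ℂ))) (Complex.I * x) := by
      apply continuousAt_cpow_const
      rw [Complex.mem_slitPlane_iff]
      right
      simp [hx]
    have h3 : Tendsto (fun ε : ℝ =>
        Complex.Gamma β * ((ε : ℂ) + Complex.I * x) ^ (-(β : ℂ))) (𝓝[>] 0)
        (𝓝 (Complex.Gamma β * (Complex.I * x) ^ (-(β : ℂ)))) :=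
      (((h2.tendsto.comp h1).const_mul _).mono_left nhdsWithin_le_nhds)
    have h4 : Complex.Gamma β * (Complex.I * x) ^ (-(β : ℂ)) =
        Complex.Gamma β * Complex.exp (-Complex.I * Real.pi * β / 2 * Real.sign x) *
        (|x| : ℝ) ^ (-(β : ℂ)) := by
      rw [auxBranch hx, ← mul_assoc]
    rw [← h4]
    refine h3.congr' ?_
    filter_upwards [self_mem_nhdsWithin] with ε hε
    exact (hval ε hε).symm
end

section
/- For positive integer k and real u ≠ 0, lim_{Δ→k} (Δ - k)·B(Δ - 1 + m, 1)·₁F₁(Δ + m - 1; Δ + m; -iu) equals (-iu)^{1-k-m}/(1-k-m)! when 0 ≤ m ≤ 1-k (with k ≤ 1, m ≥ 0 integers), and equals 0 when m > 1 - k. -/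
open Filter Topology Complex

/-- The confluent hypergeometric function `₁F₁(a;b;z) = Σ (a)_n z^n / ((b)_n n!)`. -/
noncomputable def hyp1F1 (a b z : ℂ) : ℂ :=
  ∑' n : ℕ, ((ascPochhammer ℂ n).eval a / (ascPochhammer ℂ n).eval b) * z ^ n / n.factorial

/-- The Euler Beta function `B(x,y) = Γ(x)Γ(y)/Γ(x+y)`. -/
noncomputable def eulerBeta (x y : ℂ) : ℂ :=
  Complex.Gamma x * Complex.Gamma y / Complex.Gamma (x + y)

lemma poch_prod (a : ℂ) (n : ℕ) :
    (ascPochhammer ℂ n).eval a = ∏ i ∈ Finset.range n, (a + i) := by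
  induction n with
  | zero => simp
  | succ n ih => rw [ascPochhammer_succ_eval, ih, Finset.prod_range_succ]

lemma poch_shift (a : ℂ) (n : ℕ) :
    a * (ascPochhammer ℂ n).eval (a + 1) = (ascPochhammer ℂ n).eval a * (a + n) := by
  rw [poch_prod, poch_prod, ← Finset.prod_range_succ (fun i => a + (i : ℂ)) n,
    Finset.prod_range_succ']
  rw [mul_comm]
  congr 1
  · apply Finset.prod_congr rfl
    intro i _
    push_cast
    ring
  · simp

lemma aux_beta (x : ℂ) (hx : ∀ n : ℕ, x ≠ -n) : eulerBeta x 1 = 1 / x := by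
  have hx0 : x ≠ 0 := by simpa using hx 0
  have hG : Complex.Gamma x ≠ 0 := Complex.Gamma_ne_zero hx
  rw [eulerBeta, Complex.Gamma_one, Complex.Gamma_add_one x hx0]
  field_simp

lemma poch_ratio (a : ℂ) (h : ∀ j : ℕ, a + j ≠ 0) (n : ℕ) :
    (ascPochhammer ℂ n).eval a / (ascPochhammer ℂ n).eval (a + 1) = a / (a + n) := by
  have h1 : (ascPochhammer ℂ n).eval (a + 1) ≠ 0 := by
    rw [poch_prod]
    apply Finset.prod_ne_zero_iff.2
    intro i _
    have := h (i + 1)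
    push_cast at this
    intro hc; apply this; rw [← hc]; ring
  have h2 : a + n ≠ 0 := h n
  rw [div_eq_div_iff h1 h2, poch_shift]

lemma half_le (w : ℂ) (c : ℤ) (h1 : ‖w‖ < 1 / 2) (hc : c ≠ 0) : 1 / 2 ≤ ‖w + c‖ := by
  have h2 : (1 : ℝ) ≤ ‖(c : ℂ)‖ := by
    rw [Complex.norm_intCast]
    exact_mod_cast Int.one_le_abs hc
  have h3 : ‖(c : ℂ)‖ ≤ ‖w + c‖ + ‖w‖ := by
    have := norm_sub_le (w + c) w
    simpa using this
  linarith

set_option maxHeartbeats 1000000 in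
/-- For integer `k ≤ 1`, nonnegative integer `m` and real `u ≠ 0`,
`lim_{Δ→k} (Δ-k)·B(Δ-1+m,1)·₁F₁(Δ+m-1; Δ+m; -iu)` equals
`(-iu)^{1-k-m}/(1-k-m)!` when `m ≤ 1-k`, and `0` when `m > 1-k`. -/
theorem stmt6 (k : ℤ) (hk : k ≤ 1) (m : ℕ) (u : ℝ) (hu : u ≠ 0) :
    Tendsto (fun Δ : ℂ =>
        (Δ - (k : ℂ)) * eulerBeta (Δ - 1 + m) 1 *
          hyp1F1 (Δ + m - 1) (Δ + m) (-Complex.I * u))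
      (𝓝[≠] (k : ℂ))
      (𝓝 (if (m : ℤ) ≤ 1 - k then
          (-Complex.I * u) ^ (1 - k - m).toNat / ((1 - k - m).toNat).factorial
        else 0)) := by
  set z : ℂ := -Complex.I * u with hzdef
  set F : ℂ → ℕ → ℂ := fun Δ n => (Δ - (k : ℂ)) / (Δ + m - 1 + n) * z ^ n / n.factorial
    with hFdef
  -- casting identity for the denominator
  have hδcast : ∀ (Δ : ℂ) (n : ℕ),
      Δ + m - 1 + n = (Δ - (k : ℂ)) + ((k + (m : ℤ) - 1 + n : ℤ) : ℂ) := by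
    intro Δ n; push_cast; ring
  -- nonvanishing of the denominators
  have hnz : ∀ Δ : ℂ, ‖Δ - (k : ℂ)‖ < 1 / 2 → Δ ≠ (k : ℂ) →
      ∀ j : ℕ, Δ + m - 1 + j ≠ 0 := by
    intro Δ h1 h2 j
    rw [hδcast]
    rcases eq_or_ne (k + (m : ℤ) - 1 + (j : ℤ)) 0 with h | h
    · rw [h]
      simpa using sub_ne_zero.mpr h2
    · intro hc
      have := half_le (Δ - (k : ℂ)) _ h1 h
      rw [hc] at this; norm_num at this
  -- norm formula
  have hnorm : ∀ (Δ : ℂ) (n : ℕ),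
      ‖F Δ n‖ = ‖Δ - (k : ℂ)‖ / ‖Δ + m - 1 + n‖ * ‖z‖ ^ n / n.factorial := by
    intro Δ n
    simp [hFdef, norm_div, norm_mul, norm_pow, Complex.norm_natCast]
  -- bound for regular terms
  have hbound : ∀ Δ : ℂ, ‖Δ - (k : ℂ)‖ < 1 / 2 → ∀ n : ℕ,
      (k + (m : ℤ) - 1 + (n : ℤ)) ≠ 0 →
      ‖F Δ n‖ ≤ 2 * ‖Δ - (k : ℂ)‖ * (‖z‖ ^ n / n.factorial) := by
    intro Δ h1 n hn
    have hd : 1 / 2 ≤ ‖Δ + m - 1 + n‖ := by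
      rw [hδcast]; exact half_le _ _ h1 hn
    have hz0 : (0 : ℝ) ≤ ‖z‖ ^ n / n.factorial := by positivity
    have hfrac : ‖Δ - (k : ℂ)‖ / ‖Δ + m - 1 + n‖ ≤ 2 * ‖Δ - (k : ℂ)‖ := by
      rw [div_le_iff₀ (by linarith : (0 : ℝ) < ‖Δ + m - 1 + n‖)]
      nlinarith [norm_nonneg (Δ - (k : ℂ))]
    rw [hnorm, mul_div_assoc]
    exact mul_le_mul_of_nonneg_right hfrac hz0
  -- summability
  have hsum : ∀ Δ : ℂ, ‖Δ - (k : ℂ)‖ < 1 / 2 → Δ ≠ (k : ℂ) → Summable (F Δ) := by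
    intro Δ h1 h2
    apply Summable.of_norm_bounded (g := fun n => ‖z‖ ^ n / n.factorial)
      (Real.summable_pow_div_factorial _)
    intro n
    rcases eq_or_ne (k + (m : ℤ) - 1 + (n : ℤ)) 0 with h | h
    · have hd : Δ + m - 1 + (n : ℂ) = Δ - (k : ℂ) := by
        rw [hδcast, h]; simp
      rw [hnorm, hd, div_self (by simpa [sub_eq_zero] using h2 : ‖Δ - (k : ℂ)‖ ≠ 0), one_mul]
    · calc ‖F Δ n‖ ≤ 2 * ‖Δ - (k : ℂ)‖ * (‖z‖ ^ n / n.factorial) := hbound Δ h1 n h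
        _ ≤ 1 * (‖z‖ ^ n / n.factorial) := by
            apply mul_le_mul_of_nonneg_right (by linarith) (by positivity)
        _ = ‖z‖ ^ n / n.factorial := one_mul _
  -- the function equals the series on the punctured neighborhood
  have heq : ∀ Δ : ℂ, ‖Δ - (k : ℂ)‖ < 1 / 2 → Δ ≠ (k : ℂ) →
      (Δ - (k : ℂ)) * eulerBeta (Δ - 1 + m) 1 * hyp1F1 (Δ + m - 1) (Δ + m) z
        = ∑' n, F Δ n := by
    intro Δ h1 h2
    have hnzΔ := hnz Δ h1 h2
    have ha : Δ + m - 1 ≠ 0 := by simpa using hnzΔ 0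
    have hbeta : eulerBeta (Δ - 1 + m) 1 = 1 / (Δ - 1 + m) := by
      apply aux_beta
      intro n hcon
      apply hnzΔ n
      linear_combination hcon
    have hhyp : hyp1F1 (Δ + m - 1) (Δ + m) z
        = ∑' n : ℕ, (Δ + m - 1) / (Δ + m - 1 + n) * z ^ n / n.factorial := by
      unfold hyp1F1
      apply tsum_congr
      intro n
      have hb := poch_ratio (Δ + m - 1) hnzΔ n
      rw [show Δ + (m : ℂ) - 1 + 1 = Δ + m from by ring] at hb
      rw [hb]
    rw [hbeta, hhyp, ← tsum_mul_left]
    apply tsum_congr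
    intro n
    have hdn : Δ + m - 1 + n ≠ 0 := hnzΔ n
    simp only [hFdef]
    rw [show Δ - 1 + (m : ℂ) = Δ + m - 1 from by ring]
    calc (Δ - (k : ℂ)) * (1 / (Δ + m - 1)) * ((Δ + m - 1) / (Δ + m - 1 + n) * z ^ n / n.factorial)
        = (Δ + m - 1) / (Δ + m - 1) * ((Δ - (k : ℂ)) / (Δ + m - 1 + n) * z ^ n / n.factorial) := by
          ring
      _ = (Δ - (k : ℂ)) / (Δ + m - 1 + n) * z ^ n / n.factorial := by
          rw [div_self ha, one_mul]
  -- eventual facts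
  have hev : ∀ᶠ Δ in 𝓝[≠] (k : ℂ), ‖Δ - (k : ℂ)‖ < 1 / 2 ∧ Δ ≠ (k : ℂ) := by
    have h1 : ∀ᶠ Δ in 𝓝 (k : ℂ), ‖Δ - (k : ℂ)‖ < 1 / 2 := by
      have hb : Metric.ball (k : ℂ) (1 / 2) ∈ 𝓝 (k : ℂ) := Metric.ball_mem_nhds _ (by norm_num)
      filter_upwards [hb] with Δ hΔ
      simpa [Complex.dist_eq] using Metric.mem_ball.mp hΔ
    filter_upwards [h1.filter_mono nhdsWithin_le_nhds, self_mem_nhdsWithin] with Δ hΔ hne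
    exact ⟨hΔ, hne⟩
  -- the tendsto of the bound
  set E : ℝ := ∑' n : ℕ, ‖z‖ ^ n / n.factorial with hEdef
  have hgE : Tendsto (fun Δ : ℂ => 2 * ‖Δ - (k : ℂ)‖ * E) (𝓝[≠] (k : ℂ)) (𝓝 0) := by
    have h0 : Tendsto (fun Δ : ℂ => Δ - (k : ℂ)) (𝓝[≠] (k : ℂ)) (𝓝 0) := by
      have h0' : Tendsto (fun Δ : ℂ => Δ - (k : ℂ)) (𝓝 (k : ℂ)) (𝓝 ((k : ℂ) - (k : ℂ))) :=
        (continuous_id.sub continuous_const).tendsto _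
      rw [sub_self] at h0'
      exact h0'.mono_left nhdsWithin_le_nhds
    have := ((h0.norm.const_mul 2).mul_const E)
    simpa using this
  by_cases hc : (m : ℤ) ≤ 1 - k
  · -- singular term present
    rw [if_pos hc]
    set n₀ : ℕ := (1 - k - m).toNat with hn₀def
    have hn₀ : (n₀ : ℤ) = 1 - k - m := Int.toNat_of_nonneg (by omega)
    have hF0 : ∀ Δ : ℂ, Δ ≠ (k : ℂ) → F Δ n₀ = z ^ n₀ / n₀.factorial := by
      intro Δ h2
      have hz0 : (k + (m : ℤ) - 1 + (n₀ : ℤ)) = 0 := by omega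
      have hd : Δ + m - 1 + (n₀ : ℂ) = Δ - (k : ℂ) := by
        rw [hδcast, hz0]; simp
      simp only [hFdef]
      rw [hd, div_self (sub_ne_zero.mpr h2), one_mul]
    have hR : Tendsto (fun Δ : ℂ => ∑' n : ℕ, if n = n₀ then 0 else F Δ n)
        (𝓝[≠] (k : ℂ)) (𝓝 0) := by
      apply squeeze_zero_norm' _ hgE
      filter_upwards [hev] with Δ hΔ
      obtain ⟨h1, h2⟩ := hΔ
      have hterm : ∀ n : ℕ, ‖if n = n₀ then (0 : ℂ) else F Δ n‖
          ≤ 2 * ‖Δ - (k : ℂ)‖ * (‖z‖ ^ n / n.factorial) := by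
        intro n
        by_cases hn : n = n₀
        · rw [hn, if_pos rfl, norm_zero]
          positivity
        · rw [if_neg hn]
          apply hbound Δ h1 n
          intro hcon
          apply hn
          have : (n : ℤ) = (n₀ : ℤ) := by omega
          exact_mod_cast this
      have hsb : Summable (fun n : ℕ => 2 * ‖Δ - (k : ℂ)‖ * (‖z‖ ^ n / n.factorial)) :=
        (Real.summable_pow_div_factorial _).mul_left _
      have hsn : Summable (fun n : ℕ => ‖if n = n₀ then (0 : ℂ) else F Δ n‖) :=
        Summable.of_nonneg_of_le (fun n => norm_nonneg _) hterm hsb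
      calc ‖∑' n : ℕ, if n = n₀ then (0 : ℂ) else F Δ n‖
          ≤ ∑' n : ℕ, ‖if n = n₀ then (0 : ℂ) else F Δ n‖ := norm_tsum_le_tsum_norm hsn
        _ ≤ ∑' n : ℕ, 2 * ‖Δ - (k : ℂ)‖ * (‖z‖ ^ n / n.factorial) :=
            Summable.tsum_le_tsum hterm hsn hsb
        _ = 2 * ‖Δ - (k : ℂ)‖ * E := tsum_mul_left
    have hmain : Tendsto (fun Δ : ℂ =>
        z ^ n₀ / (n₀.factorial : ℂ) + ∑' n : ℕ, if n = n₀ then 0 else F Δ n)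
        (𝓝[≠] (k : ℂ)) (𝓝 (z ^ n₀ / (n₀.factorial : ℂ))) := by
      have := tendsto_const_nhds (x := z ^ n₀ / (n₀.factorial : ℂ))
        (f := 𝓝[≠] (k : ℂ)).add hR
      simpa using this
    apply hmain.congr'
    filter_upwards [hev] with Δ hΔ
    obtain ⟨h1, h2⟩ := hΔ
    rw [heq Δ h1 h2, Summable.tsum_eq_add_tsum_ite (hsum Δ h1 h2) n₀, hF0 Δ h2]
  · -- no singular term
    rw [if_neg hc]
    have hns : ∀ n : ℕ, (k + (m : ℤ) - 1 + (n : ℤ)) ≠ 0 := by intro n; omega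
    have hR : Tendsto (fun Δ : ℂ => ∑' n : ℕ, F Δ n) (𝓝[≠] (k : ℂ)) (𝓝 0) := by
      apply squeeze_zero_norm' _ hgE
      filter_upwards [hev] with Δ hΔ
      obtain ⟨h1, h2⟩ := hΔ
      have hterm : ∀ n : ℕ, ‖F Δ n‖ ≤ 2 * ‖Δ - (k : ℂ)‖ * (‖z‖ ^ n / n.factorial) :=
        fun n => hbound Δ h1 n (hns n)
      have hsb : Summable (fun n : ℕ => 2 * ‖Δ - (k : ℂ)‖ * (‖z‖ ^ n / n.factorial)) :=
        (Real.summable_pow_div_factorial _).mul_left _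
      have hsn : Summable (fun n : ℕ => ‖F Δ n‖) :=
        Summable.of_nonneg_of_le (fun n => norm_nonneg _) hterm hsb
      calc ‖∑' n : ℕ, F Δ n‖ ≤ ∑' n : ℕ, ‖F Δ n‖ := norm_tsum_le_tsum_norm hsn
        _ ≤ ∑' n : ℕ, 2 * ‖Δ - (k : ℂ)‖ * (‖z‖ ^ n / n.factorial) :=
            Summable.tsum_le_tsum hterm hsn hsb
        _ = 2 * ‖Δ - (k : ℂ)‖ * E := tsum_mul_left
    apply hR.congr'
    filter_upwards [hev] with Δ hΔ
    exact (heq Δ hΔ.1 hΔ.2).symm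
end
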